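/- (Water-filling characterization.) Let y* maximize g(y) = U(Σ_q y_q) - Σ_q (ρ/2 y_q² - a_q y_q) over {0 ≤ y_q ≤ N_q}, with U continuously differentiable, concave, increasing, ρ > 0, and let a_max = max_q a_q. Then there exists a level L ≥ 0 such that for every q ∈ Q, y*_q = min(N_q, max(0, L - (a_max - a_q)/ρ)). That is, the optimal solution fills each 'bucket' q placed at height (a_max - a_q)/ρ with capacity N_q up to a common water level L. -/

import Mathlib

open Filter Set Topology

/-- One-dimensional first-order conditions for a maximizer on `Icc 0 N`. -/
lemma foc_clamp {φ : ℝ → ℝ} {N t D : ℝ} (hN : 0 < N) (ht : t ∈ Set.Icc 0 N)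
    (hmax : IsMaxOn φ (Set.Icc 0 N) t) (hD : HasDerivAt φ D t)
    {ρ m : ℝ} (hρ : 0 < ρ) (hm : D = ρ * (m - t)) : t = min N (max 0 m) := by
  have hloc : IsLocalMaxOn φ (Set.Icc 0 N) t := hmax.localize
  have hF : HasFDerivWithinAt φ ((1 : ℝ →L[ℝ] ℝ).smulRight D) (Set.Icc 0 N) t :=
    hD.hasDerivWithinAt
  have hle : t < N → D ≤ 0 := by
    intro htN
    have h1 : (1 : ℝ) ∈ posTangentConeAt (Set.Icc 0 N) t := by
      apply mem_posTangentConeAt_of_frequently_mem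
      have : Set.Ioo (0 : ℝ) (N - t) ∈ 𝓝[>] (0 : ℝ) :=
        Ioo_mem_nhdsGT_of_mem ⟨le_refl _, by linarith⟩
      refine Filter.Eventually.frequently ?_
      filter_upwards [this] with s hs
      simp only [smul_eq_mul, mul_one, Set.mem_Icc]
      constructor <;> [linarith [ht.1, hs.1]; linarith [hs.2]]
    have := hloc.hasFDerivWithinAt_nonpos hF h1
    simp only [ContinuousLinearMap.smulRight_apply, ContinuousLinearMap.one_apply,
      one_smul] at this
    linarith
  have hge : 0 < t → 0 ≤ D := by
    intro ht0
    have h1 : (-1 : ℝ) ∈ posTangentConeAt (Set.Icc 0 N) t := by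
      apply mem_posTangentConeAt_of_frequently_mem
      have : Set.Ioo (0 : ℝ) t ∈ 𝓝[>] (0 : ℝ) :=
        Ioo_mem_nhdsGT_of_mem ⟨le_refl _, ht0⟩
      refine Filter.Eventually.frequently ?_
      filter_upwards [this] with s hs
      simp only [smul_eq_mul, mul_neg_one, Set.mem_Icc]
      constructor <;> [linarith [hs.2]; linarith [hs.1, ht.2]]
    have := hloc.hasFDerivWithinAt_nonpos hF h1
    simp only [ContinuousLinearMap.smulRight_apply, ContinuousLinearMap.one_apply,
      one_smul, neg_one_smul] at this
    linarith
  rcases eq_or_lt_of_le ht.2 with hEq | hlt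
  · -- t = N
    have h0 : 0 < t := hEq ▸ hN
    have := hge h0
    have hmN : N ≤ m := by rw [hm] at this; nlinarith [hEq]
    rw [hEq]
    rw [min_eq_left (le_max_of_le_right hmN)]
  · -- t < N
    have hDle := hle hlt
    have hmt : m ≤ t := by rw [hm] at hDle; nlinarith
    rcases eq_or_lt_of_le ht.1 with hEq0 | ht0
    · rw [← hEq0, max_eq_left (by linarith), min_eq_right hN.le]
    · have := hge ht0
      have : t ≤ m := by rw [hm] at this; nlinarith
      have hm_eq : m = t := le_antisymm hmt this
      rw [hm_eq, max_eq_right ht.1, min_eq_right hlt.le]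

/-- Water-filling characterization: the optimal y* has the form
y*_q = min(N_q, max(0, L - (a_max - a_q)/ρ)) for a common level L ≥ 0. -/
theorem stmt_6 {Q : Type*} [Fintype Q] [Nonempty Q] (U : ℝ → ℝ)
    (hU : ContDiff ℝ 1 U) (hUconc : ConcaveOn ℝ Set.univ U) (hUmono : Monotone U)
    (ρ : ℝ) (hρ : 0 < ρ) (N a : Q → ℝ) (hN : ∀ q, 0 < N q)
    (amax : ℝ) (hamax : IsGreatest (Set.range a) amax)
    (g : (Q → ℝ) → ℝ)
    (hg : ∀ y, g y = U (∑ q, y q) - ∑ q, (ρ / 2 * (y q) ^ 2 - a q * y q))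
    (B : Set (Q → ℝ)) (hB : B = {y | ∀ q, y q ∈ Set.Icc 0 (N q)})
    (ystar : Q → ℝ) (hyB : ystar ∈ B) (hymax : IsMaxOn g B ystar) :
    ∃ L, 0 ≤ L ∧ ∀ q, ystar q = min (N q) (max 0 (L - (amax - a q) / ρ)) := by
  classical
  set S : ℝ := ∑ q, ystar q with hS
  set c : ℝ := deriv U S with hc
  -- the key pointwise characterization
  have key : ∀ q, ystar q = min (N q) (max 0 ((c + a q) / ρ)) := by
    intro q
    set T : ℝ := ∑ p ∈ Finset.univ.erase q, ystar p with hT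
    set C : ℝ := ∑ p ∈ Finset.univ.erase q, (ρ / 2 * (ystar p) ^ 2 - a p * ystar p) with hC
    have hTS : T + ystar q = S := by
      rw [hS, hT, ← Finset.add_sum_erase _ _ (Finset.mem_univ q)]; ring
    set φ : ℝ → ℝ := fun t => U (T + t) - (ρ / 2 * t ^ 2 - a q * t) - C with hφ
    have hupd : ∀ t, g (Function.update ystar q t) = φ t := by
      intro t
      rw [hg, hφ]
      have h1 : ∑ p, Function.update ystar q t p = T + t := by
        rw [← Finset.add_sum_erase _ _ (Finset.mem_univ q), Function.update_self]
        rw [Finset.sum_congr rfl fun p hp =>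
          Function.update_of_ne (Finset.ne_of_mem_erase hp) _ _]
        ring
      have h2 : ∑ p, (ρ / 2 * (Function.update ystar q t p) ^ 2
          - a p * Function.update ystar q t p) = (ρ / 2 * t ^ 2 - a q * t) + C := by
        rw [← Finset.add_sum_erase _ _ (Finset.mem_univ q), Function.update_self, hC]
        congr 1
        refine Finset.sum_congr rfl fun p hp => ?_
        rw [Function.update_of_ne (Finset.ne_of_mem_erase hp)]
      rw [h1, h2]; ring
    have hgy : g ystar = φ (ystar q) := by
      rw [← hupd (ystar q), Function.update_eq_self]
    have hmem : ystar q ∈ Set.Icc 0 (N q) := by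
      rw [hB] at hyB; exact hyB q
    have hφmax : IsMaxOn φ (Set.Icc 0 (N q)) (ystar q) := by
      intro t ht
      have hmemB : Function.update ystar q t ∈ B := by
        rw [hB]; intro p
        by_cases hpq : p = q
        · subst hpq; rw [Function.update_self]; exact ht
        · rw [Function.update_of_ne hpq]; rw [hB] at hyB; exact hyB p
      have := hymax hmemB
      simpa [hupd t, ← hgy] using this
    have hder : HasDerivAt φ (c + a q - ρ * ystar q) (ystar q) := by
      have hU' : HasDerivAt U (deriv U S) S :=
        ((hU.differentiable one_ne_zero) S).hasDerivAt
      have hlin : HasDerivAt (fun t : ℝ => T + t) 1 (ystar q) :=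
        (hasDerivAt_id (ystar q)).const_add T
      have h1 : HasDerivAt (fun t => U (T + t)) c (ystar q) := by
        have hU'' : HasDerivAt U c (T + ystar q) := by rw [hTS]; exact hU'
        have := HasDerivAt.comp (ystar q) hU'' hlin
        rw [mul_one] at this; exact this
      have h2 : HasDerivAt (fun t : ℝ => ρ / 2 * t ^ 2 - a q * t)
          (ρ * ystar q - a q) (ystar q) := by
        have hp : HasDerivAt (fun t : ℝ => t ^ 2) (2 * ystar q) (ystar q) := by
          simpa using hasDerivAt_pow 2 (ystar q)
        have := (hp.const_mul (ρ / 2)).sub ((hasDerivAt_id (ystar q)).const_mul (a q))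
        exact this.congr_deriv (by ring)
      have := (h1.sub h2).sub_const C
      exact this.congr_deriv (by ring)
    exact foc_clamp (hN q) hmem hφmax hder hρ (by field_simp)
  refine ⟨max 0 ((c + amax) / ρ), le_max_left _ _, fun q => ?_⟩
  rw [key q]
  have haq : a q ≤ amax := hamax.2 ⟨q, rfl⟩
  rcases le_or_gt 0 ((c + amax) / ρ) with h0 | h0
  · rw [max_eq_right h0]
    congr 2
    field_simp
    ring
  · rw [max_eq_left h0.le]
    congr 1
    have h1 : (c + a q) / ρ ≤ 0 := by
      apply div_nonpos_of_nonpos_of_nonneg _ hρ.le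
      have := (div_neg_iff.mp h0)
      rcases this with ⟨h, h'⟩ | ⟨h, h'⟩
      · linarith
      · linarith
    have h2 : 0 - (amax - a q) / ρ ≤ 0 := by
      simp only [zero_sub, neg_nonpos]
      exact div_nonneg (by linarith) hρ.le
    rw [max_eq_left h1, max_eq_left h2]
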